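/- Let Θ ⊆ ℝ^i and Θ̃ ⊆ ℝ^j be open sets with i ≤ j, let g : Θ̃ → Θ be twice differentiable with surjective Jacobian at every point and with g(Θ̃) = Θ, let f : Θ → ℝ be twice continuously differentiable, and set f̃ = f ∘ g. Then f̃ has a saddle point at θ̃ ∈ Θ̃ if and only if f has a saddle point at θ = g(θ̃). -/

import Mathlib

open Set Topology

/-- A saddle point of `h` on `s` at `p`: a critical point (vanishing Fréchet
derivative, equivalently vanishing gradient) that is neither a local minimum
nor a local maximum. -/
def IsSaddlePointOn' {E : Type*} [NormedAddCommGroup E] [NormedSpace ℝ E]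
    (h : E → ℝ) (s : Set E) (p : E) : Prop :=
  fderiv ℝ h p = 0 ∧ ¬ IsLocalMinOn h s p ∧ ¬ IsLocalMaxOn h s p

/-- Proposition 4 (saddle point correspondence): `f̃ = f ∘ g` has a saddle point
at `θ̃ ∈ Θ̃` iff `f` has a saddle point at `θ = g θ̃`. -/
theorem saddle_point_iff
    (i j : ℕ) (hij : i ≤ j)
    (Θ : Set (EuclideanSpace ℝ (Fin i))) (Θt : Set (EuclideanSpace ℝ (Fin j)))
    (hΘ : IsOpen Θ) (hΘt : IsOpen Θt)
    (g : EuclideanSpace ℝ (Fin j) → EuclideanSpace ℝ (Fin i))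
    (hg1 : ∀ x ∈ Θt, DifferentiableAt ℝ g x)
    (hg2 : ∀ x ∈ Θt, DifferentiableAt ℝ (fderiv ℝ g) x)
    (hsub : ∀ x ∈ Θt, Function.Surjective (fderiv ℝ g x))
    (himg : g '' Θt = Θ)
    (f : EuclideanSpace ℝ (Fin i) → ℝ)
    (hf : ContDiffOn ℝ 2 f Θ)
    (θt : EuclideanSpace ℝ (Fin j)) (hθt : θt ∈ Θt) :
    IsSaddlePointOn' (f ∘ g) Θt θt ↔ IsSaddlePointOn' f Θ (g θt) := by
  have hθ : g θt ∈ Θ := himg ▸ ⟨θt, hθt, rfl⟩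
  have hnt : 𝓝[Θt] θt = 𝓝 θt := hΘt.nhdsWithin_eq hθt
  have hn : 𝓝[Θ] (g θt) = 𝓝 (g θt) := hΘ.nhdsWithin_eq hθ
  have hgc1 : ContDiffOn ℝ 1 g Θt := by
    rw [show (1 : WithTop ℕ∞) = 0 + 1 from rfl, contDiffOn_succ_iff_fderiv_of_isOpen hΘt]
    refine ⟨fun x hx => (hg1 x hx).differentiableWithinAt, by simp, ?_⟩
    exact contDiffOn_zero.2 fun x hx => (hg2 x hx).continuousAt.continuousWithinAt
  have hstrict : HasStrictFDerivAt g (fderiv ℝ g θt) θt :=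
    (hgc1.contDiffAt (hΘt.mem_nhds hθt)).hasStrictFDerivAt one_ne_zero
  have hmap : Filter.map g (𝓝 θt) = 𝓝 (g θt) :=
    hstrict.map_nhds_eq_of_surj (LinearMap.range_eq_top.2 (hsub θt hθt))
  have hfd : DifferentiableAt ℝ f (g θt) :=
    (hf.contDiffAt (hΘ.mem_nhds hθ)).differentiableAt two_ne_zero
  have hcomp : fderiv ℝ (f ∘ g) θt = (fderiv ℝ f (g θt)).comp (fderiv ℝ g θt) :=
    fderiv_comp θt hfd (hg1 θt hθt)
  have hder : fderiv ℝ (f ∘ g) θt = 0 ↔ fderiv ℝ f (g θt) = 0 := by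
    rw [hcomp]
    constructor
    · intro h
      ext v
      obtain ⟨u, hu⟩ := hsub θt hθt v
      have := ContinuousLinearMap.ext_iff.1 h u
      simpa [hu] using this
    · intro h
      rw [h]
      ext u
      simp
  have hmin : IsLocalMinOn (f ∘ g) Θt θt ↔ IsLocalMinOn f Θ (g θt) := by
    unfold IsLocalMinOn IsMinFilter
    rw [hnt, hn, ← hmap, Filter.eventually_map]
    rfl
  have hmax : IsLocalMaxOn (f ∘ g) Θt θt ↔ IsLocalMaxOn f Θ (g θt) := by
    unfold IsLocalMaxOn IsMaxFilter
    rw [hnt, hn, ← hmap, Filter.eventually_map]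
    rfl
  simp only [IsSaddlePointOn', hder, hmin, hmax]
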